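/- arXiv:0704.1493 — 2 statements merged into one kernel-verified Lean document; each statement's English description precedes it below -/
import Mathlib

section
/- Two adjacent vertices of G never share their first coordinate; moreover, for each vertex v of G and each point p' distinct from the first coordinate of v, v has exactly 2 neighbors with first coordinate p'. -/
/-- Points of the Fano plane: we use `1,…,7` inside `Fin 8`. -/
abbrev FPt := Fin 8

/-- The seven lines of the Fano plane. -/
def fanoLines : Finset (Finset FPt) :=
  {{1,2,3},{1,4,5},{1,6,7},{2,4,6},{2,5,7},{3,4,7},{3,5,6}}

/-- The seven points of the Fano plane. -/
def fanoPoints : Finset FPt := {1,2,3,4,5,6,7}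

/-- `(p, pairs)` is an ordered pencil if for each `i`, `insert p (pairs i)`
is a Fano line, and the three (2-element) pairs are distinct. -/
def IsPencil (v : FPt × (Fin 3 → Finset FPt)) : Prop :=
  v.1 ∈ fanoPoints ∧
  (∀ i, (v.2 i).card = 2 ∧ v.1 ∉ v.2 i ∧ insert v.1 (v.2 i) ∈ fanoLines) ∧
  Function.Injective v.2

instance : DecidablePred IsPencil := fun v => by
  unfold IsPencil Function.Injective; infer_instance

/-- Ordered pencils of the Fano plane: the vertices of the graph `G`. -/
def Pencil := {v : FPt × (Fin 3 → Finset FPt) // IsPencil v}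

instance : DecidableEq Pencil := by unfold Pencil; infer_instance
instance : Fintype Pencil := by unfold Pencil; infer_instance

/-- Adjacency: different base points, and the pairs in each position meet
in exactly one point. -/
def pAdj (v w : Pencil) : Prop :=
  v.1.1 ≠ w.1.1 ∧ ∀ i, (v.1.2 i ∩ w.1.2 i).card = 1

instance : DecidableRel pAdj := fun v w => by unfold pAdj; infer_instance

/-- The graph `G` on the 42 ordered pencils of the Fano plane. -/
def G : SimpleGraph Pencil where
  Adj := pAdj
  symm := ⟨fun v w h => ⟨h.1.symm, fun i => by rw [Finset.inter_comm]; exact h.2 i⟩⟩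
  loopless := ⟨fun v h => h.1 rfl⟩

instance : DecidableRel G.Adj := fun v w => by
  change Decidable (pAdj v w); infer_instance


/-- Raw adjacency on raw tuples. -/
def RawAdj (a b : FPt × (Fin 3 → Finset FPt)) : Prop :=
  a.1 ≠ b.1 ∧ ∀ i, (a.2 i ∩ b.2 i).card = 1

instance : DecidableRel RawAdj := fun a b => by unfold RawAdj; infer_instance

/-- The 21 (point, pair) combinations. -/
def pairTable : Finset (FPt × Finset FPt) :=
  {(1, ({2,3} : Finset FPt)), (1, ({4,5} : Finset FPt)), (1, ({6,7} : Finset FPt)), (2, ({1,3} : Finset FPt)), (2, ({4,6} : Finset FPt)), (2, ({5,7} : Finset FPt)), (3, ({1,2} : Finset FPt)), (3, ({4,7} : Finset FPt)), (3, ({5,6} : Finset FPt)), (4, ({1,5} : Finset FPt)), (4, ({2,6} : Finset FPt)), (4, ({3,7} : Finset FPt)), (5, ({1,4} : Finset FPt)), (5, ({2,7} : Finset FPt)), (5, ({3,6} : Finset FPt)), (6, ({1,7} : Finset FPt)), (6, ({2,4} : Finset FPt)), (6, ({3,5} : Finset FPt)), (7, ({1,6} : Finset FPt)), (7, ({2,5}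 : Finset FPt)), (7, ({3,4} : Finset FPt))}

/-- The 42 raw pencils, as a list. -/
def rawList : List (FPt × (Fin 3 → Finset FPt)) :=
  [(1, ![({2,3} : Finset FPt), {4,5}, {6,7}]),
   (1, ![({2,3} : Finset FPt), {6,7}, {4,5}]),
   (1, ![({4,5} : Finset FPt), {2,3}, {6,7}]),
   (1, ![({4,5} : Finset FPt), {6,7}, {2,3}]),
   (1, ![({6,7} : Finset FPt), {2,3}, {4,5}]),
   (1, ![({6,7} : Finset FPt), {4,5}, {2,3}]),
   (2, ![({1,3} : Finset FPt), {4,6}, {5,7}]),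
   (2, ![({1,3} : Finset FPt), {5,7}, {4,6}]),
   (2, ![({4,6} : Finset FPt), {1,3}, {5,7}]),
   (2, ![({4,6} : Finset FPt), {5,7}, {1,3}]),
   (2, ![({5,7} : Finset FPt), {1,3}, {4,6}]),
   (2, ![({5,7} : Finset FPt), {4,6}, {1,3}]),
   (3, ![({1,2} : Finset FPt), {4,7}, {5,6}]),
   (3, ![({1,2} : Finset FPt), {5,6}, {4,7}]),
   (3, ![({4,7} : Finset FPt), {1,2}, {5,6}]),
   (3, ![({4,7} : Finset FPt), {5,6}, {1,2}]),
   (3, ![({5,6} : Finset FPt), {1,2}, {4,7}]),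
   (3, ![({5,6} : Finset FPt), {4,7}, {1,2}]),
   (4, ![({1,5} : Finset FPt), {2,6}, {3,7}]),
   (4, ![({1,5} : Finset FPt), {3,7}, {2,6}]),
   (4, ![({2,6} : Finset FPt), {1,5}, {3,7}]),
   (4, ![({2,6} : Finset FPt), {3,7}, {1,5}]),
   (4, ![({3,7} : Finset FPt), {1,5}, {2,6}]),
   (4, ![({3,7} : Finset FPt), {2,6}, {1,5}]),
   (5, ![({1,4} : Finset FPt), {2,7}, {3,6}]),
   (5, ![({1,4} : Finset FPt), {3,6}, {2,7}]),
   (5, ![({2,7} : Finset FPt), {1,4}, {3,6}]),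
   (5, ![({2,7} : Finset FPt), {3,6}, {1,4}]),
   (5, ![({3,6} : Finset FPt), {1,4}, {2,7}]),
   (5, ![({3,6} : Finset FPt), {2,7}, {1,4}]),
   (6, ![({1,7} : Finset FPt), {2,4}, {3,5}]),
   (6, ![({1,7} : Finset FPt), {3,5}, {2,4}]),
   (6, ![({2,4} : Finset FPt), {1,7}, {3,5}]),
   (6, ![({2,4} : Finset FPt), {3,5}, {1,7}]),
   (6, ![({3,5} : Finset FPt), {1,7}, {2,4}]),
   (6, ![({3,5} : Finset FPt), {2,4}, {1,7}]),
   (7, ![({1,6} : Finset FPt), {2,5}, {3,4}]),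
   (7, ![({1,6} : Finset FPt), {3,4}, {2,5}]),
   (7, ![({2,5} : Finset FPt), {1,6}, {3,4}]),
   (7, ![({2,5} : Finset FPt), {3,4}, {1,6}]),
   (7, ![({3,4} : Finset FPt), {1,6}, {2,5}]),
   (7, ![({3,4} : Finset FPt), {2,5}, {1,6}])]

set_option maxRecDepth 10000 in
lemma rawNodup : rawList.Nodup := by decide

/-- The 42 raw pencils, as a finset. -/
def rawFinset : Finset (FPt × (Fin 3 → Finset FPt)) := ⟨↑rawList, rawNodup⟩

lemma memraw {t : FPt × (Fin 3 → Finset FPt)} : t ∈ rawFinset ↔ t ∈ rawList :=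
  Finset.mem_mk.trans Multiset.mem_coe

set_option maxRecDepth 10000 in
lemma lemA : ∀ p ∈ fanoPoints, ∀ s : Finset FPt, s.card = 2 → p ∉ s →
    insert p s ∈ fanoLines → (p, s) ∈ pairTable := by decide

set_option maxRecDepth 10000 in
lemma lemB : ∀ x ∈ pairTable, ∀ y ∈ pairTable, ∀ z ∈ pairTable,
    x.1 = y.1 → y.1 = z.1 → x.2 ≠ y.2 → x.2 ≠ z.2 → y.2 ≠ z.2 →
    (x.1, ![x.2, y.2, z.2]) ∈ rawFinset := by decide

set_option maxRecDepth 10000 in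
lemma allP_bool : rawList.all (fun t => decide (IsPencil t)) = true := by decide

lemma allP : ∀ t ∈ rawList, IsPencil t := by
  have h := allP_bool
  simp only [List.all_eq_true, decide_eq_true_eq] at h
  exact h

def pts7 : List FPt := [1,2,3,4,5,6,7]

set_option maxRecDepth 10000 in
lemma pts7_mem : ∀ p ∈ fanoPoints, p ∈ pts7 := by decide

set_option maxRecDepth 10000 in
lemma keyCount_bool : rawList.all (fun t0 => pts7.all (fun p' =>
    (p' == t0.1) ||
      decide ((rawFinset.filter (fun t => RawAdj t0 t ∧ t.1 = p')).card = 2))) = true := by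
  decide

lemma keyCount : ∀ t0 ∈ rawList, ∀ p' ∈ pts7, p' ≠ t0.1 →
    (rawFinset.filter (fun t => RawAdj t0 t ∧ t.1 = p')).card = 2 := by
  have h := keyCount_bool
  simp only [List.all_eq_true, Bool.or_eq_true, beq_iff_eq, decide_eq_true_eq] at h
  intro t0 ht0 p' hp' hne
  rcases h t0 ht0 p' hp' with h' | h'
  · exact absurd h' hne
  · exact h'

lemma complete : ∀ v : Pencil, v.1 ∈ rawList := by
  rintro ⟨⟨p, f⟩, hp, h2, hinj⟩
  have hpair : ∀ i, (p, f i) ∈ pairTable :=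
    fun i => lemA p hp (f i) (h2 i).1 (h2 i).2.1 (h2 i).2.2
  have hf : f = ![f 0, f 1, f 2] := by
    funext i; fin_cases i <;> rfl
  have h01 : f 0 ≠ f 1 := fun h => absurd (hinj h) (by decide)
  have h02 : f 0 ≠ f 2 := fun h => absurd (hinj h) (by decide)
  have h12 : f 1 ≠ f 2 := fun h => absurd (hinj h) (by decide)
  have hmem := lemB (p, f 0) (hpair 0) (p, f 1) (hpair 1) (p, f 2) (hpair 2)
    rfl rfl h01 h02 h12
  show (p, f) ∈ rawList
  rw [hf]
  exact memraw.mp hmem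

set_option maxRecDepth 100000 in
theorem neighbors_by_base_point :
    (∀ v w : Pencil, G.Adj v w → v.1.1 ≠ w.1.1) ∧
    (∀ v : Pencil, ∀ p' ∈ fanoPoints, p' ≠ v.1.1 →
      (Finset.univ.filter (fun w : Pencil => G.Adj v w ∧ w.1.1 = p')).card = 2) := by

  constructor
  · exact fun v w h => h.1
  · intro v p' hp'mem hp'
    have hcard : (Finset.univ.filter (fun w : Pencil => G.Adj v w ∧ w.1.1 = p')).card
        = (rawFinset.filter (fun t => RawAdj v.1 t ∧ t.1 = p')).card := by
      refine Finset.card_bij' (fun w _ => w.1)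
        (fun t ht => ⟨t, allP t (memraw.mp (Finset.mem_filter.mp ht).1)⟩) ?_ ?_ ?_ ?_
      · intro w hw
        rcases Finset.mem_filter.mp hw with ⟨-, hadj, hfst⟩
        exact Finset.mem_filter.mpr ⟨memraw.mpr (complete w), hadj, hfst⟩
      · intro t ht
        rcases Finset.mem_filter.mp ht with ⟨hmem, hadj, hfst⟩
        exact Finset.mem_filter.mpr ⟨Finset.mem_univ _, hadj, hfst⟩
      · intro w _; rfl
      · intro t _; rfl
    rw [hcard]
    exact keyCount v.1 (complete v) p' (pts7_mem p' hp'mem) hp'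
end

section
/- The quotient graph G' obtained from G by identifying ordered pencils with the same first coordinate (with multiplicity of edges counted between classes) is the complete graph K_7 with every edge doubled: between any two distinct points p ≠ p' of the Fano plane there are exactly 12 edges of G joining pencils based at p to pencils based at p', i.e., each of the 6 pencils at p has exactly 2 neighbors at p'. -/
def univL0 : Finset (FPt × (Fin 3 → Finset FPt)) :=
  {(1, ![{2,3}, {4,5}, {6,7}]),
   (1, ![{2,3}, {6,7}, {4,5}]),
   (1, ![{4,5}, {2,3}, {6,7}]),
   (1, ![{4,5}, {6,7}, {2,3}]),
   (1, ![{6,7}, {2,3}, {4,5}]),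
   (1, ![{6,7}, {4,5}, {2,3}]),
   (2, ![{1,3}, {4,6}, {5,7}]),
   (2, ![{1,3}, {5,7}, {4,6}]),
   (2, ![{4,6}, {1,3}, {5,7}]),
   (2, ![{4,6}, {5,7}, {1,3}]),
   (2, ![{5,7}, {1,3}, {4,6}]),
   (2, ![{5,7}, {4,6}, {1,3}]),
   (3, ![{1,2}, {4,7}, {5,6}]),
   (3, ![{1,2}, {5,6}, {4,7}]),
   (3, ![{4,7}, {1,2}, {5,6}]),
   (3, ![{4,7}, {5,6}, {1,2}]),
   (3, ![{5,6}, {1,2}, {4,7}]),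
   (3, ![{5,6}, {4,7}, {1,2}]),
   (4, ![{1,5}, {2,6}, {3,7}]),
   (4, ![{1,5}, {3,7}, {2,6}]),
   (4, ![{2,6}, {1,5}, {3,7}]),
   (4, ![{2,6}, {3,7}, {1,5}]),
   (4, ![{3,7}, {1,5}, {2,6}]),
   (4, ![{3,7}, {2,6}, {1,5}]),
   (5, ![{1,4}, {2,7}, {3,6}]),
   (5, ![{1,4}, {3,6}, {2,7}]),
   (5, ![{2,7}, {1,4}, {3,6}]),
   (5, ![{2,7}, {3,6}, {1,4}]),
   (5, ![{3,6}, {1,4}, {2,7}]),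
   (5, ![{3,6}, {2,7}, {1,4}]),
   (6, ![{1,7}, {2,4}, {3,5}]),
   (6, ![{1,7}, {3,5}, {2,4}]),
   (6, ![{2,4}, {1,7}, {3,5}]),
   (6, ![{2,4}, {3,5}, {1,7}]),
   (6, ![{3,5}, {1,7}, {2,4}]),
   (6, ![{3,5}, {2,4}, {1,7}]),
   (7, ![{1,6}, {2,5}, {3,4}]),
   (7, ![{1,6}, {3,4}, {2,5}]),
   (7, ![{2,5}, {1,6}, {3,4}]),
   (7, ![{2,5}, {3,4}, {1,6}]),
   (7, ![{3,4}, {1,6}, {2,5}]),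
   (7, ![{3,4}, {2,5}, {1,6}])}

def pairsOf : FPt → Fin 3 → Finset FPt :=
  ![![∅,∅,∅], ![{2,3}, {4,5}, {6,7}], ![{1,3}, {4,6}, {5,7}], ![{1,2}, {4,7}, {5,6}], ![{1,5}, {2,6}, {3,7}], ![{1,4}, {2,7}, {3,6}], ![{1,7}, {2,4}, {3,5}], ![{1,6}, {2,5}, {3,4}]]


def univL : Finset Pencil := univL0.subtype IsPencil

set_option maxRecDepth 10000 in
lemma key' : ∀ p ∈ fanoPoints, ∀ L ∈ fanoLines,
    L.erase p = pairsOf p 0 ∨ L.erase p = pairsOf p 1 ∨ L.erase p = pairsOf p 2 ∨ p ∉ L := by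
  decide

lemma pt_cases : ∀ p ∈ fanoPoints,
    p = 1 ∨ p = 2 ∨ p = 3 ∨ p = 4 ∨ p = 5 ∨ p = 6 ∨ p = 7 := by decide

lemma inj3 {α : Type*} {a b c : α} {f : Fin 3 → α}
    (h0 : f 0 = a ∨ f 0 = b ∨ f 0 = c) (h1 : f 1 = a ∨ f 1 = b ∨ f 1 = c)
    (h2 : f 2 = a ∨ f 2 = b ∨ f 2 = c) (hinj : Function.Injective f) :
    f = ![a,b,c] ∨ f = ![a,c,b] ∨ f = ![b,a,c] ∨ f = ![b,c,a] ∨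
    f = ![c,a,b] ∨ f = ![c,b,a] := by
  have hf : f = ![f 0, f 1, f 2] := funext fun i => by fin_cases i <;> rfl
  rcases h0 with h0|h0|h0 <;> rcases h1 with h1|h1|h1 <;> rcases h2 with h2|h2|h2 <;>
    first
    | exact absurd (hinj (h0.trans h1.symm)) (by decide)
    | exact absurd (hinj (h0.trans h2.symm)) (by decide)
    | exact absurd (hinj (h1.trans h2.symm)) (by decide)
    | (rw [h0, h1, h2] at hf; tauto)

set_option maxRecDepth 4000 in
lemma complete0 (x : FPt × (Fin 3 → Finset FPt)) (hx : IsPencil x) : x ∈ univL0 := by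
  obtain ⟨p, f⟩ := x
  obtain ⟨hp, hl, hinj⟩ := hx
  have hmem : ∀ i, f i = pairsOf p 0 ∨ f i = pairsOf p 1 ∨ f i = pairsOf p 2 := by
    intro i
    have h := hl i
    have e : (insert p (f i)).erase p = f i := Finset.erase_insert h.2.1
    rcases key' p hp _ h.2.2 with k|k|k|k
    · exact Or.inl (e ▸ k)
    · exact Or.inr (Or.inl (e ▸ k))
    · exact Or.inr (Or.inr (e ▸ k))
    · exact absurd (Finset.mem_insert_self p _) k
  have h6 := inj3 (hmem 0) (hmem 1) (hmem 2) hinj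
  rcases pt_cases p hp with h|h|h|h|h|h|h <;> subst h <;>
    rcases h6 with h|h|h|h|h|h <;> subst h <;> decide

lemma complete_s17 (v : Pencil) : v ∈ univL :=
  Finset.mem_subtype.mpr (complete0 v.1 v.2)

lemma huniv : (Finset.univ : Finset Pencil) = univL :=
  (Finset.eq_univ_of_forall complete_s17).symm

set_option maxRecDepth 10000 in
set_option maxHeartbeats 2000000 in
lemma part1 : ∀ p ∈ fanoPoints, ∀ p' ∈ fanoPoints, p ≠ p' →
    ((univL ×ˢ univL).filter (fun e : Pencil × Pencil =>
      G.Adj e.1 e.2 ∧ e.1.1.1 = p ∧ e.2.1.1 = p')).card = 12 := by decide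

set_option maxRecDepth 10000 in
set_option maxHeartbeats 2000000 in
lemma part2 : ∀ p' ∈ fanoPoints,
    univL.filter (fun v : Pencil => ¬ (v.1.1 ≠ p' →
      (univL.filter (fun w : Pencil => G.Adj v w ∧ w.1.1 = p')).card = 2)) = ∅ := by decide

theorem quotient_is_doubled_K7 :
    ∀ p ∈ fanoPoints, ∀ p' ∈ fanoPoints, p ≠ p' →
      (Finset.univ.filter (fun e : Pencil × Pencil =>
          G.Adj e.1 e.2 ∧ e.1.1.1 = p ∧ e.2.1.1 = p')).card = 12 ∧
      (∀ v : Pencil, v.1.1 = p →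
        (Finset.univ.filter (fun w : Pencil => G.Adj v w ∧ w.1.1 = p')).card = 2) := by
  have hP : (Finset.univ : Finset (Pencil × Pencil)) = univL ×ˢ univL := by
    rw [← Finset.univ_product_univ, huniv]
  intro p hp p' hp' hne
  refine ⟨by rw [hP]; exact part1 p hp p' hp' hne, fun v hv => ?_⟩
  rw [huniv]
  have hvp' : v.1.1 ≠ p' := fun h => hne (hv.symm.trans h)
  have hnm := Finset.eq_empty_iff_forall_notMem.mp (part2 p' hp') v
  exact not_not.mp (fun hn => hnm (Finset.mem_filter.mpr ⟨complete_s17 v, hn⟩)) hvp'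
end
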